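/- Let p be an odd prime and let u be a unit of ℤ_p. Let R := ℤ_p[X]/(X² − Polynomial.C u), a free ℤ_p-algebra with basis 1, η where η is the image of X, and let σ be the unique ℤ_p-algebra automorphism of R with σ(η) = −η. Let x, y ∈ ℤ_p, let c be a positive integer, and let s ∈ R satisfy s − 1 ∈ p^c·R. If σ(x + η·y) = (x + η·y)·s, then y ∈ p^c·ℤ_p; equivalently, x + η·y lies in the subring ℤ_p + p^c·R. -/

import Mathlib

open Polynomial

/-- Lemma 3.1: in `R = ℤ_p[η]` with `η² = u` a unit and `p` odd, if
`σ(x + η·y) = (x + η·y)·s` with `s ≡ 1 (mod p^c)`, then `p^c ∣ y`, i.e.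
`x + η·y` lies in the order `ℤ_p + p^c·R` of conductor `p^c`. -/
theorem conj_eq_mul_of_cong_one (p : ℕ) [Fact p.Prime] (hp : p ≠ 2) (u : ℤ_[p]ˣ)
    (σ : (ℤ_[p][X] ⧸ Ideal.span {X ^ 2 - C (u : ℤ_[p])}) →ₐ[ℤ_[p]]
         (ℤ_[p][X] ⧸ Ideal.span {X ^ 2 - C (u : ℤ_[p])}))
    (hσ : σ (Ideal.Quotient.mk _ X) = -(Ideal.Quotient.mk _ X))
    (x y : ℤ_[p]) (c : ℕ) (hc : 0 < c)
    (s : ℤ_[p][X] ⧸ Ideal.span {X ^ 2 - C (u : ℤ_[p])})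
    (hs : ((p : ℤ_[p][X] ⧸ Ideal.span {X ^ 2 - C (u : ℤ_[p])}) ^ c) ∣ (s - 1))
    (h : σ (algebraMap ℤ_[p] _ x + Ideal.Quotient.mk _ X * algebraMap ℤ_[p] _ y)
        = (algebraMap ℤ_[p] _ x + Ideal.Quotient.mk _ X * algebraMap ℤ_[p] _ y) * s) :
    (p : ℤ_[p]) ^ c ∣ y := by
  have hf : (X ^ 2 - C (u : ℤ_[p])).Monic := monic_X_pow_sub_C _ two_ne_zero
  have hdeg : (X ^ 2 - C (u : ℤ_[p])).natDegree = 2 := natDegree_X_pow_sub_C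
  let B : Module.Basis (Fin 2) ℤ_[p] (ℤ_[p][X] ⧸ Ideal.span {X ^ 2 - C (u : ℤ_[p])}) :=
    (AdjoinRoot.powerBasis' hf).basis.reindex (finCongr hdeg)
  have hroot : AdjoinRoot.root (X ^ 2 - C (u : ℤ_[p]))
      = Ideal.Quotient.mk (Ideal.span {X ^ 2 - C (u : ℤ_[p])}) X := rfl
  have hB1 : B 1 = Ideal.Quotient.mk (Ideal.span {X ^ 2 - C (u : ℤ_[p])}) X := by
    rw [show B 1 = (AdjoinRoot.powerBasis' hf).basis ((finCongr hdeg).symm 1) from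
      Module.Basis.reindex_apply (M := AdjoinRoot (X ^ 2 - C (u : ℤ_[p]))) _ _ 1, PowerBasis.coe_basis, AdjoinRoot.powerBasis'_gen, ← hroot]
    norm_num
    rfl
  -- notation
  set A : ℤ_[p] →+* (ℤ_[p][X] ⧸ Ideal.span {X ^ 2 - C (u : ℤ_[p])}) :=
    algebraMap ℤ_[p] _ with hA
  have hσz : σ (A x + Ideal.Quotient.mk _ X * A y)
      = A x - Ideal.Quotient.mk _ X * A y := by
    rw [map_add, map_mul, hσ, AlgHom.commutes, AlgHom.commutes]
    ring
  obtain ⟨t, ht⟩ := hs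
  set η : ℤ_[p][X] ⧸ Ideal.span {X ^ 2 - C (u : ℤ_[p])} := Ideal.Quotient.mk _ X with hη
  have key : A (2 * y) * η = A ((p : ℤ_[p]) ^ c) * (-((A x + η * A y) * t)) := by
    have h2 : (A x + η * A y) * (s - 1) = -(2 * (η * A y)) := by
      rw [mul_sub, mul_one, ← h, hσz]; ring
    rw [ht] at h2
    have hpc : ((p : ℤ_[p][X] ⧸ Ideal.span {X ^ 2 - C (u : ℤ_[p])})) ^ c
        = A ((p : ℤ_[p]) ^ c) := by rw [map_pow, map_natCast]
    rw [hpc] at h2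
    rw [map_mul, map_ofNat A 2]
    linear_combination h2
  have e1 : ∀ (a : ℤ_[p]) (z : ℤ_[p][X] ⧸ Ideal.span {X ^ 2 - C (u : ℤ_[p])}),
      B.coord 1 (A a * z) = a * B.coord 1 z := by
    intro a z
    rw [← Algebra.smul_def, map_smul, smul_eq_mul]
  have key2 := congrArg (B.coord 1) key
  rw [e1, e1] at key2
  rw [show η = B 1 from hB1.symm] at key2
  simp only [Module.Basis.coord_apply, Module.Basis.repr_self, Finsupp.single_eq_same, mul_one] at key2
  have hdvd2 : (p : ℤ_[p]) ^ c ∣ 2 * y := ⟨_, key2⟩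
  have hu2 : IsUnit (2 : ℤ_[p]) := by
    rw [PadicInt.isUnit_iff]
    have hle : ‖(2 : ℤ_[p])‖ ≤ 1 := PadicInt.norm_le_one _
    rcases lt_or_eq_of_le hle with hlt | he
    · exfalso
      have hd : (p : ℤ) ∣ 2 := by
        have := PadicInt.norm_int_lt_one_iff_dvd (p := p) 2
        exact this.mp (by exact_mod_cast hlt)
      have hd' : p ∣ 2 := by exact_mod_cast hd
      exact hp ((Nat.prime_dvd_prime_iff_eq Fact.out Nat.prime_two).mp hd')
    · exact he
  obtain ⟨v, hv⟩ := hu2.exists_left_inv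
  have hy : y = v * (2 * y) := by rw [← mul_assoc, hv, one_mul]
  rw [hy]
  exact Dvd.dvd.mul_left hdvd2 v
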